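/- Let h be C² strictly increasing with h(0)=0, h''≥0, λ>0 C¹ with (hλ)'>0, δ>0, f'=λf with f(0)=1, and define g(x) := f(h⁻¹(x))·x + δ·F(h⁻¹(x)) for x in the range of h, where F(y)=∫_0^y f. Then g'(x) = (f(y)/h'(y))·(h(y)λ(y) + h'(y) + δ) at y = h⁻¹(x); consequently g is decreasing on (h(-∞), h(y_∞)], increasing on [h(y_∞), h(∞)), where y_∞ is the root of hλ + h' + δ = 0. -/

import Mathlib

open Real intervalIntegral

/-- Remark 3.5: for `g(x) = f(h⁻¹(x))·x + δ·F(h⁻¹(x))` one has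
`g'(h(y)) = (f(y)/h'(y))(h(y)λ(y) + h'(y) + δ)`; consequently `g` is decreasing on
`h((-∞, y_∞])` and increasing on `h([y_∞, ∞))`, where `y_∞` solves `hλ+h'+δ = 0`. -/
theorem stmt19 (h lam : ℝ → ℝ) (δ yInf : ℝ)
    (hC2 : ContDiff ℝ 2 h) (hh0 : h 0 = 0)
    (hmono : StrictMono h)
    (hh' : ∀ y, 0 < deriv h y)
    (hh'' : ∀ y, 0 ≤ deriv (deriv h) y)
    (hlamC1 : ContDiff ℝ 1 lam) (hlampos : ∀ y, 0 < lam y)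
    (hhlam' : ∀ y, 0 < deriv (fun z => h z * lam z) y)
    (hδ : 0 < δ)
    (hyInf : h yInf * lam yInf + deriv h yInf + δ = 0)
    (hyInfuniq : ∀ z, h z * lam z + deriv h z + δ = 0 → z = yInf)
    (f F hinv g : ℝ → ℝ)
    (hf : ∀ y, f y = Real.exp (∫ x in (0:ℝ)..y, lam x))
    (hF : ∀ y, F y = ∫ x in (0:ℝ)..y, f x)
    (hinv_left : ∀ y, hinv (h y) = y)
    (hg : ∀ x, g x = f (hinv x) * x + δ * F (hinv x)) :
    (∀ y : ℝ, HasDerivAt g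
      ((f y / deriv h y) * (h y * lam y + deriv h y + δ)) (h y)) ∧
    AntitoneOn g (h '' Set.Iic yInf) ∧
    MonotoneOn g (h '' Set.Ici yInf) := by
  have hlamc : Continuous lam := hlamC1.continuous
  -- strict derivative of h
  have hsd : ∀ y, HasStrictDerivAt h (deriv h y) y := fun y =>
    hC2.hasStrictDerivAt (by norm_num)
  -- derivative of hinv
  have hinvd : ∀ y, HasDerivAt hinv (deriv h y)⁻¹ (h y) := by
    intro y
    exact ((hsd y).to_local_left_inverse (hh' y).ne'
      (Filter.Eventually.of_forall hinv_left)).hasDerivAt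
  -- derivative of f
  have hL : ∀ y, HasDerivAt (fun u => ∫ x in (0:ℝ)..u, lam x) (lam y) y := fun y =>
    (hlamc.integral_hasStrictDerivAt 0 y).hasDerivAt
  have hfeq : f = fun y => Real.exp (∫ x in (0:ℝ)..y, lam x) := funext hf
  have hfd : ∀ y, HasDerivAt f (f y * lam y) y := by
    intro y
    rw [hfeq]
    exact (hL y).exp
  have hfpos : ∀ y, 0 < f y := fun y => by rw [hf]; positivity
  have hfc : Continuous f := by
    rw [hfeq]
    have : Differentiable ℝ (fun u => ∫ x in (0:ℝ)..u, lam x) := fun y =>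
      (hL y).differentiableAt
    exact Real.continuous_exp.comp this.continuous
  -- derivative of F
  have hFd : ∀ y, HasDerivAt F (f y) y := by
    intro y
    rw [funext hF]
    exact (hfc.integral_hasStrictDerivAt 0 y).hasDerivAt
  -- part 1 : derivative of g
  have part1 : ∀ y : ℝ, HasDerivAt g
      ((f y / deriv h y) * (h y * lam y + deriv h y + δ)) (h y) := by
    intro y
    have hfdy : HasDerivAt f (f y * lam y) (hinv (h y)) := by rw [hinv_left]; exact hfd y
    have hFdy : HasDerivAt F (f y) (hinv (h y)) := by rw [hinv_left]; exact hFd y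
    have h1 : HasDerivAt (fun x => f (hinv x)) (f y * lam y * (deriv h y)⁻¹) (h y) :=
      hfdy.comp (h y) (hinvd y)
    have h2 : HasDerivAt (fun x => F (hinv x)) (f y * (deriv h y)⁻¹) (h y) :=
      hFdy.comp (h y) (hinvd y)
    have h3 : HasDerivAt (fun x => f (hinv x) * x + δ * F (hinv x))
        ((f y * lam y * (deriv h y)⁻¹) * (h y) + f (hinv (h y)) * 1
          + δ * (f y * (deriv h y)⁻¹)) (h y) :=
      (h1.mul (hasDerivAt_id _)).add (h2.const_mul δ)
    rw [funext hg]
    convert h3 using 1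
    rw [hinv_left]
    have hne := (hh' y).ne'
    field_simp
  -- the auxiliary function φ and its monotonicity
  have hhdiff : Differentiable ℝ h := hC2.differentiable (by norm_num)
  have h2' : ContDiff ℝ (1 + 1 : WithTop ℕ∞) h := by
    rw [show ((1 : WithTop ℕ∞) + 1) = 2 by norm_num]; exact hC2
  have hd1 : ContDiff ℝ 1 (deriv h) := (contDiff_succ_iff_deriv.mp h2').2.2
  have hφmono : StrictMono (fun z => h z * lam z + deriv h z + δ) := by
    apply strictMono_of_hasDerivAt_pos
      (f' := fun z => deriv (fun w => h w * lam w) z + deriv (deriv h) z)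
    · intro z
      have hprod : DifferentiableAt ℝ (fun w => h w * lam w) z :=
        (hhdiff z).mul (hlamC1.differentiable (by norm_num) z)
      exact (hprod.hasDerivAt.add (hd1.differentiable (by norm_num) z).hasDerivAt).add_const δ
    · intro z
      exact add_pos_of_pos_of_nonneg (hhlam' z) (hh'' z)
  refine ⟨part1, ?_, ?_⟩
  · -- Antitone on h '' Iic yInf
    have hconv : Convex ℝ (h '' Set.Iic yInf) := by
      rw [convex_iff_ordConnected]
      constructor
      intro x hx y hy c hc
      obtain ⟨a, ha, rfl⟩ := hx
      obtain ⟨b, hb, rfl⟩ := hy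
      rcases le_or_gt a b with hab | hab
      · obtain ⟨z, hz, rfl⟩ := intermediate_value_Icc hab hC2.continuous.continuousOn hc
        exact ⟨z, le_trans hz.2 hb, rfl⟩
      · rw [Set.Icc_eq_empty (not_le.mpr (hmono hab))] at hc
        exact absurd hc (Set.notMem_empty _)
    apply antitoneOn_of_deriv_nonpos hconv
    · intro x hx
      obtain ⟨z, _, rfl⟩ := hx
      exact ((part1 z).differentiableAt.continuousAt).continuousWithinAt
    · intro x hx
      obtain ⟨z, _, rfl⟩ := interior_subset hx
      exact (part1 z).differentiableAt.differentiableWithinAt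
    · intro x hx
      obtain ⟨z, hz, rfl⟩ := interior_subset hx
      rw [(part1 z).deriv]
      apply mul_nonpos_of_nonneg_of_nonpos
      · exact le_of_lt (div_pos (hfpos z) (hh' z))
      · have : (fun z => h z * lam z + deriv h z + δ) z
            ≤ (fun z => h z * lam z + deriv h z + δ) yInf := hφmono.monotone hz
        simpa [hyInf] using this
  · -- Monotone on h '' Ici yInf
    have hconv : Convex ℝ (h '' Set.Ici yInf) := by
      rw [convex_iff_ordConnected]
      constructor
      intro x hx y hy c hc
      obtain ⟨a, ha, rfl⟩ := hx
      obtain ⟨b, hb, rfl⟩ := hy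
      rcases le_or_gt a b with hab | hab
      · obtain ⟨z, hz, rfl⟩ := intermediate_value_Icc hab hC2.continuous.continuousOn hc
        exact ⟨z, le_trans ha hz.1, rfl⟩
      · rw [Set.Icc_eq_empty (not_le.mpr (hmono hab))] at hc
        exact absurd hc (Set.notMem_empty _)
    apply monotoneOn_of_deriv_nonneg hconv
    · intro x hx
      obtain ⟨z, _, rfl⟩ := hx
      exact ((part1 z).differentiableAt.continuousAt).continuousWithinAt
    · intro x hx
      obtain ⟨z, _, rfl⟩ := interior_subset hx
      exact (part1 z).differentiableAt.differentiableWithinAt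
    · intro x hx
      obtain ⟨z, hz, rfl⟩ := interior_subset hx
      rw [(part1 z).deriv]
      apply mul_nonneg
      · exact le_of_lt (div_pos (hfpos z) (hh' z))
      · have : (fun z => h z * lam z + deriv h z + δ) yInf
            ≤ (fun z => h z * lam z + deriv h z + δ) z := hφmono.monotone hz
        simpa [hyInf] using this
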